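/- Let P_1, P_2 be probability mass functions on a finite set A with P_2(a) > 0 for all a. For any sequence of decision regions C_n ⊆ A^n, if the type-I error probabilities α_n = P_1^n(C_n^c) → 0 as n → ∞, then liminf_{n→∞} (1/n) log P_2^n(C_n) ≥ -H(P_1‖P_2). -/

import Mathlib

open scoped BigOperators
open Finset

private lemma stein_factor_sum {A : Type*} [Fintype A] (n : ℕ) (G : Fin n → A → ℝ) :
    ∑ x : Fin n → A, ∏ i, G i (x i) = ∏ i, ∑ a, G i a := by
  rw [Finset.prod_univ_sum, Fintype.piFinset_univ]

private lemma stein_pair_sum {A : Type*} [Fintype A] (P : A → ℝ) (hP1 : ∑ a, P a = 1)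
    (h : A → ℝ) {n : ℕ} (i j : Fin n) (hij : i ≠ j) :
    ∑ x : Fin n → A, (∏ k, P (x k)) * (h (x i) * h (x j))
      = (∑ a, P a * h a) * (∑ a, P a * h a) := by
  have key : ∀ x : Fin n → A,
      (∏ k, P (x k)) * (h (x i) * h (x j))
        = ∏ k, (fun k (a : A) => (P a * (if k = i then h a else 1)) * (if k = j then h a else 1)) k (x k) := by
    intro x
    simp only []
    rw [Finset.prod_mul_distrib, Finset.prod_mul_distrib,
      Finset.prod_ite_eq' Finset.univ i (fun k => h (x k)),
      Finset.prod_ite_eq' Finset.univ j (fun k => h (x k))]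
    simp [mul_assoc]
  simp_rw [key]
  rw [stein_factor_sum n (fun k (a : A) => (P a * (if k = i then h a else 1)) * (if k = j then h a else 1))]
  have : ∀ k : Fin n, (∑ a, (P a * (if k = i then h a else 1)) * (if k = j then h a else 1))
      = (if k = i then (∑ a, P a * h a) else 1) * (if k = j then (∑ a, P a * h a) else 1) := by
    intro k
    by_cases hki : k = i <;> by_cases hkj : k = j <;>
      simp_all [hP1]
  simp_rw [this]
  rw [Finset.prod_mul_distrib,
    Finset.prod_ite_eq' Finset.univ i (fun _ => (∑ a, P a * h a)),
    Finset.prod_ite_eq' Finset.univ j (fun _ => (∑ a, P a * h a))]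
  simp

private lemma stein_single_sum {A : Type*} [Fintype A] (P : A → ℝ) (hP1 : ∑ a, P a = 1)
    (h : A → ℝ) {n : ℕ} (i : Fin n) :
    ∑ x : Fin n → A, (∏ k, P (x k)) * h (x i) = ∑ a, P a * h a := by
  have key : ∀ x : Fin n → A,
      (∏ k, P (x k)) * h (x i)
        = ∏ k, (fun k (a : A) => P a * (if k = i then h a else 1)) k (x k) := by
    intro x
    simp only []
    rw [Finset.prod_mul_distrib, Finset.prod_ite_eq' Finset.univ i (fun k => h (x k))]
    simp
  simp_rw [key]
  rw [stein_factor_sum n (fun k (a : A) => P a * (if k = i then h a else 1))]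
  have : ∀ k : Fin n, (∑ a, P a * (if k = i then h a else 1))
      = (if k = i then (∑ a, P a * h a) else 1) := by
    intro k; by_cases hki : k = i <;> simp_all [hP1]
  simp_rw [this]
  rw [Finset.prod_ite_eq' Finset.univ i (fun _ => (∑ a, P a * h a))]
  simp

private lemma stein_total_one {A : Type*} [Fintype A] (P : A → ℝ) (hP1 : ∑ a, P a = 1) (n : ℕ) :
    ∑ x : Fin n → A, ∏ k, P (x k) = 1 := by
  rw [stein_factor_sum n (fun _ a => P a)]; simp [hP1]

private lemma stein_first_moment {A : Type*} [Fintype A] (P : A → ℝ) (hP1 : ∑ a, P a = 1)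
    (h : A → ℝ) (n : ℕ) :
    ∑ x : Fin n → A, (∏ k, P (x k)) * (∑ i, h (x i)) = n * (∑ a, P a * h a) := by
  have L1 : ∑ x : Fin n → A, (∏ k, P (x k)) * (∑ i, h (x i))
      = ∑ x : Fin n → A, ∑ i, (∏ k, P (x k)) * h (x i) :=
    Finset.sum_congr rfl fun x _ => Finset.mul_sum _ _ _
  rw [L1, Finset.sum_comm]
  simp_rw [stein_single_sum P hP1 h]
  rw [Finset.sum_const, Finset.card_univ, Fintype.card_fin, nsmul_eq_mul]

private lemma stein_second_moment {A : Type*} [Fintype A] (P : A → ℝ) (hP1 : ∑ a, P a = 1)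
    (h : A → ℝ) (n : ℕ) :
    ∑ x : Fin n → A, (∏ k, P (x k)) * (∑ i, h (x i))^2
      = n * (∑ a, P a * (h a * h a)) + (n * (n - 1)) * ((∑ a, P a * h a) * (∑ a, P a * h a)) := by
  have expand : ∀ x : Fin n → A, (∑ i, h (x i))^2 = ∑ i, ∑ j, h (x i) * h (x j) := by
    intro x; rw [sq, Finset.sum_mul_sum]
  have L1 : ∑ x : Fin n → A, (∏ k, P (x k)) * (∑ i, h (x i))^2
      = ∑ x : Fin n → A, ∑ i, ∑ j, (∏ k, P (x k)) * (h (x i) * h (x j)) := by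
    refine Finset.sum_congr rfl fun x _ => ?_
    rw [expand, Finset.mul_sum]
    exact Finset.sum_congr rfl fun i _ => Finset.mul_sum _ _ _
  rw [L1, Finset.sum_comm]
  have step : ∑ i : Fin n, ∑ x : Fin n → A, ∑ j, (∏ k, P (x k)) * (h (x i) * h (x j))
      = ∑ i : Fin n, ∑ j : Fin n, ∑ x : Fin n → A, (∏ k, P (x k)) * (h (x i) * h (x j)) :=
    Finset.sum_congr rfl fun i _ => Finset.sum_comm
  rw [step]
  have inner : ∀ i j : Fin n, ∑ x : Fin n → A, (∏ k, P (x k)) * (h (x i) * h (x j))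
      = if i = j then (∑ a, P a * (h a * h a)) else ((∑ a, P a * h a) * (∑ a, P a * h a)) := by
    intro i j
    by_cases hij : i = j
    · subst hij
      simp only [if_pos rfl]
      exact stein_single_sum P hP1 (fun a => h a * h a) i
    · rw [if_neg hij]; exact stein_pair_sum P hP1 h i j hij
  simp_rw [inner]
  obtain ⟨M, hM⟩ : ∃ M, ∑ a, P a * (h a * h a) = M := ⟨_, rfl⟩
  obtain ⟨E, hE⟩ : ∃ E, ∑ a, P a * h a = E := ⟨_, rfl⟩
  rw [hM, hE]
  have rowsum : ∀ i : Fin n, (∑ j : Fin n, if i = j then M else E * E) = (M - E * E) + n * (E * E) := by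
    intro i
    have : ∀ j : Fin n, (if i = j then M else E * E) = (if i = j then (M - E * E) else 0) + E * E := by
      intro j; by_cases hij : i = j <;> simp [hij]
    simp_rw [this]
    rw [Finset.sum_add_distrib, Finset.sum_ite_eq, if_pos (Finset.mem_univ i),
      Finset.sum_const, Finset.card_univ, Fintype.card_fin, nsmul_eq_mul]
  simp_rw [rowsum]
  rw [Finset.sum_const, Finset.card_univ, Fintype.card_fin, nsmul_eq_mul]
  ring

/-- Chebyshev-type bound for the upper tail of `∑ i, h (x i)` under the product measure. -/
private lemma stein_cheb {A : Type*} [Fintype A] (P : A → ℝ) (hP0 : ∀ a, 0 ≤ P a)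
    (hP1 : ∑ a, P a = 1) (h : A → ℝ) {ε : ℝ} (hε : 0 < ε) {n : ℕ} (hn : 0 < n) :
    ∑ x ∈ Finset.univ.filter
        (fun x : Fin n → A => (n : ℝ) * ((∑ a, P a * h a) + ε) < ∑ i, h (x i)),
      ∏ k, P (x k)
      ≤ (∑ a, P a * (h a * h a)) / ((n : ℝ) * ε ^ 2) := by
  classical
  set μ : ℝ := ∑ a, P a * h a with hμ
  set M : ℝ := ∑ a, P a * (h a * h a) with hMdef
  have hnpos : (0 : ℝ) < n := by exact_mod_cast hn
  have hpnn : ∀ x : Fin n → A, 0 ≤ ∏ k, P (x k) :=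
    fun x => Finset.prod_nonneg fun k _ => hP0 _
  have total : ∑ x : Fin n → A, (∏ k, P (x k)) * ((∑ i, h (x i)) - n * μ)^2
      = n * M - n * μ^2 := by
    have e : ∀ x : Fin n → A, (∏ k, P (x k)) * ((∑ i, h (x i)) - n * μ)^2
        = (∏ k, P (x k)) * (∑ i, h (x i))^2
          - (2 * n * μ) * ((∏ k, P (x k)) * (∑ i, h (x i)))
          + ((n : ℝ) * μ)^2 * (∏ k, P (x k)) := by
      intro x; ring
    rw [Finset.sum_congr rfl fun x _ => e x]
    rw [Finset.sum_add_distrib, Finset.sum_sub_distrib, ← Finset.mul_sum, ← Finset.mul_sum,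
      stein_second_moment P hP1 h n, stein_first_moment P hP1 h n, stein_total_one P hP1 n]
    rw [← hμ, ← hMdef]
    ring
  set bad : Finset (Fin n → A) :=
    Finset.univ.filter (fun x : Fin n → A => (n : ℝ) * (μ + ε) < ∑ i, h (x i)) with hbad
  have hbound : (∑ x ∈ bad, ∏ k, P (x k)) * ((n : ℝ)^2 * ε^2) ≤ n * M - n * μ^2 := by
    rw [← total, Finset.sum_mul]
    refine le_trans (Finset.sum_le_sum ?_)
      (Finset.sum_le_sum_of_subset_of_nonneg (Finset.filter_subset _ _) ?_)
    · intro x hx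
      have hx' : (n : ℝ) * (μ + ε) < ∑ i, h (x i) := (Finset.mem_filter.mp hx).2
      have h1 : (n : ℝ) * ε ≤ (∑ i, h (x i)) - n * μ := by nlinarith
      have h2 : (n : ℝ)^2 * ε^2 ≤ ((∑ i, h (x i)) - n * μ)^2 := by
        rw [← mul_pow]
        exact pow_le_pow_left₀ (mul_nonneg hnpos.le hε.le) h1 2
      exact mul_le_mul_of_nonneg_left h2 (hpnn x)
    · intro x _ _
      exact mul_nonneg (hpnn x) (sq_nonneg _)
  have hsum_nn : 0 ≤ ∑ x ∈ bad, ∏ k, P (x k) := Finset.sum_nonneg fun x _ => hpnn x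
  rw [le_div_iff₀ (by positivity)]
  nlinarith [sq_nonneg μ, hbound]

private lemma stein_pointwise {A : Type*} [Fintype A] (P₁ P₂ : A → ℝ)
    (hP₁0 : ∀ a, 0 ≤ P₁ a) (hP₂ : ∀ a, 0 < P₂ a) {n : ℕ} (x : Fin n → A) :
    Real.exp (-(∑ i, Real.log (P₁ (x i) / P₂ (x i)))) * ∏ i, P₁ (x i) ≤ ∏ i, P₂ (x i) := by
  by_cases hx : ∀ i, 0 < P₁ (x i)
  · have e : ∀ i : Fin n, P₁ (x i) = P₂ (x i) * Real.exp (Real.log (P₁ (x i) / P₂ (x i))) := by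
      intro i
      rw [Real.exp_log (div_pos (hx i) (hP₂ _)), mul_comm, div_mul_cancel₀ _ (hP₂ (x i)).ne']
    refine le_of_eq ?_
    calc Real.exp (-(∑ i, Real.log (P₁ (x i) / P₂ (x i)))) * ∏ i, P₁ (x i)
        = Real.exp (-(∑ i, Real.log (P₁ (x i) / P₂ (x i))))
            * ∏ i, (P₂ (x i) * Real.exp (Real.log (P₁ (x i) / P₂ (x i)))) := by
          rw [Finset.prod_congr rfl fun i _ => e i]
      _ = (Real.exp (-(∑ i, Real.log (P₁ (x i) / P₂ (x i))))
            * Real.exp (∑ i, Real.log (P₁ (x i) / P₂ (x i)))) * ∏ i, P₂ (x i) := by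
          rw [Finset.prod_mul_distrib, ← Real.exp_sum]; ring
      _ = ∏ i, P₂ (x i) := by rw [← Real.exp_add, neg_add_cancel, Real.exp_zero, one_mul]
  · push_neg at hx
    obtain ⟨i, hi⟩ := hx
    have h0 : P₁ (x i) = 0 := le_antisymm hi (hP₁0 _)
    rw [Finset.prod_eq_zero (Finset.mem_univ i) h0, mul_zero]
    exact (Finset.prod_pos fun i _ => hP₂ _).le

/-- Converse part of Stein's lemma: if the type-I errors of decision regions `C_n`
vanish, then `liminf (1/n) log P₂ⁿ(C_n) ≥ -H(P₁‖P₂)`. -/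
theorem stmt_7 {A : Type*} [Fintype A] (P₁ P₂ : A → ℝ)
    (hP₁0 : ∀ a, 0 ≤ P₁ a) (hP₁1 : ∑ a, P₁ a = 1)
    (hP₂ : ∀ a, 0 < P₂ a) (hP₂1 : ∑ a, P₂ a = 1)
    (C : (n : ℕ) → Finset (Fin n → A))
    (hα : Filter.Tendsto (fun n : ℕ => 1 - ∑ x ∈ C n, ∏ i, P₁ (x i))
      Filter.atTop (nhds 0)) :
    -(∑ a, P₁ a * Real.log (P₁ a / P₂ a)) ≤
      Filter.liminf (fun n : ℕ => (1 / (n : ℝ)) * Real.log (∑ x ∈ C n, ∏ i, P₂ (x i)))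
        Filter.atTop := by
  classical
  set f : A → ℝ := fun a => Real.log (P₁ a / P₂ a) with hf
  set H : ℝ := ∑ a, P₁ a * f a with hH
  set M : ℝ := ∑ a, P₁ a * (f a * f a) with hMdef
  set u : ℕ → ℝ := fun n => (1 / (n : ℝ)) * Real.log (∑ x ∈ C n, ∏ i, P₂ (x i)) with hu
  -- the sequence is bounded above by 0
  have hub : ∀ n, u n ≤ 0 := by
    intro n
    have hsle : ∑ x ∈ C n, ∏ i, P₂ (x i) ≤ 1 := by
      rw [← stein_total_one P₂ hP₂1 n]
      exact Finset.sum_le_sum_of_subset_of_nonneg (Finset.subset_univ _)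
        (fun x _ _ => Finset.prod_nonneg fun i _ => (hP₂ _).le)
    have hsnn : 0 ≤ ∑ x ∈ C n, ∏ i, P₂ (x i) :=
      Finset.sum_nonneg fun x _ => Finset.prod_nonneg fun i _ => (hP₂ _).le
    have hlog : Real.log (∑ x ∈ C n, ∏ i, P₂ (x i)) ≤ 0 := Real.log_nonpos hsnn hsle
    exact mul_nonpos_of_nonneg_of_nonpos (by positivity) hlog
  have key : ∀ ε : ℝ, 0 < ε → ∀ᶠ n in Filter.atTop, -(H + 2 * ε) ≤ u n := by
    intro ε hε
    have h1 : ∀ᶠ n in Filter.atTop, 1 - (∑ x ∈ C n, ∏ i, P₁ (x i)) < 1/8 :=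
      hα.eventually (eventually_lt_nhds (by norm_num))
    have h2 : ∀ᶠ n : ℕ in Filter.atTop, (M / ε^2) / n < 1/8 :=
      (tendsto_const_div_atTop_nhds_zero_nat (M / ε^2)).eventually
        (eventually_lt_nhds (by norm_num))
    have h3 : ∀ᶠ n : ℕ in Filter.atTop, Real.log 2 / n < ε :=
      (tendsto_const_div_atTop_nhds_zero_nat (Real.log 2)).eventually
        (eventually_lt_nhds hε)
    filter_upwards [h1, h2, h3, Filter.eventually_ge_atTop 1] with n hn1 hn2 hn3 hn4
    have hnpos : (0 : ℝ) < n := by exact_mod_cast hn4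
    -- Chebyshev bound
    have hcheb : ∑ x ∈ Finset.univ.filter
          (fun x : Fin n → A => (n : ℝ) * (H + ε) < ∑ i, f (x i)), ∏ k, P₁ (x k)
        ≤ M / ((n : ℝ) * ε ^ 2) := by
      have := stein_cheb P₁ hP₁0 hP₁1 f hε (n := n) (by omega)
      rwa [← hH, ← hMdef] at this
    have hMb : M / ((n : ℝ) * ε ^ 2) ≤ 1/8 := by
      have : M / ((n : ℝ) * ε ^ 2) = (M / ε^2) / n := by
        rw [div_div]; ring_nf
      rw [this]; linarith
    -- split C n by the typicality predicate
    set p : (Fin n → A) → Prop := fun x => (n : ℝ) * (H + ε) < ∑ i, f (x i) with hp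
    have hsplit := Finset.sum_filter_add_sum_filter_not (C n) p (fun x => ∏ k, P₁ (x k))
    have hsubset : ∑ x ∈ (C n).filter p, ∏ k, P₁ (x k)
        ≤ ∑ x ∈ Finset.univ.filter p, ∏ k, P₁ (x k) :=
      Finset.sum_le_sum_of_subset_of_nonneg
        (Finset.filter_subset_filter p (Finset.subset_univ _))
        (fun x _ _ => Finset.prod_nonneg fun i _ => hP₁0 _)
    have hgood : 1/2 ≤ ∑ x ∈ (C n).filter (fun x => ¬ p x), ∏ k, P₁ (x k) := by
      have := hsplit
      have h78 : (7:ℝ)/8 < ∑ x ∈ C n, ∏ i, P₁ (x i) := by linarith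
      linarith [hcheb, hMb, hsubset]
    -- lower bound for the P₂-mass of C n
    have hP2b : Real.exp (-((n : ℝ) * (H + ε))) * (1/2) ≤ ∑ x ∈ C n, ∏ i, P₂ (x i) := by
      calc Real.exp (-((n : ℝ) * (H + ε))) * (1/2)
          ≤ Real.exp (-((n : ℝ) * (H + ε)))
              * ∑ x ∈ (C n).filter (fun x => ¬ p x), ∏ k, P₁ (x k) :=
            mul_le_mul_of_nonneg_left hgood (Real.exp_pos _).le
        _ = ∑ x ∈ (C n).filter (fun x => ¬ p x),
              Real.exp (-((n : ℝ) * (H + ε))) * ∏ k, P₁ (x k) := Finset.mul_sum _ _ _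
        _ ≤ ∑ x ∈ (C n).filter (fun x => ¬ p x), ∏ i, P₂ (x i) := by
            refine Finset.sum_le_sum fun x hx => ?_
            have hSx : ∑ i, f (x i) ≤ (n : ℝ) * (H + ε) :=
              not_lt.mp (Finset.mem_filter.mp hx).2
            calc Real.exp (-((n : ℝ) * (H + ε))) * ∏ k, P₁ (x k)
                ≤ Real.exp (-(∑ i, f (x i))) * ∏ k, P₁ (x k) :=
                  mul_le_mul_of_nonneg_right (Real.exp_le_exp.mpr (by linarith))
                    (Finset.prod_nonneg fun i _ => hP₁0 _)
              _ ≤ ∏ i, P₂ (x i) := stein_pointwise P₁ P₂ hP₁0 hP₂ x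
        _ ≤ ∑ x ∈ C n, ∏ i, P₂ (x i) :=
            Finset.sum_le_sum_of_subset_of_nonneg (Finset.filter_subset _ _)
              (fun x _ _ => Finset.prod_nonneg fun i _ => (hP₂ _).le)
    have hLpos : (0:ℝ) < Real.exp (-((n : ℝ) * (H + ε))) * (1/2) := by positivity
    have hlog : -((n : ℝ) * (H + ε)) - Real.log 2
        ≤ Real.log (∑ x ∈ C n, ∏ i, P₂ (x i)) := by
      have := Real.log_le_log hLpos hP2b
      rwa [Real.log_mul (Real.exp_ne_zero _) (by norm_num), Real.log_exp,
        show (1/2 : ℝ) = 2⁻¹ by norm_num, Real.log_inv, ← sub_eq_add_neg] at this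
    have hmul : (1 / (n : ℝ)) * (-((n : ℝ) * (H + ε)) - Real.log 2)
        ≤ u n := mul_le_mul_of_nonneg_left hlog (by positivity)
    have hid : (1 / (n : ℝ)) * (-((n : ℝ) * (H + ε)) - Real.log 2)
        = -(H + ε) - Real.log 2 / n := by
      field_simp
    rw [hid] at hmul
    linarith
  have cobdd : Filter.IsCoboundedUnder (· ≥ ·) Filter.atTop u :=
    Filter.isCoboundedUnder_ge_of_le _ hub
  have hfin : ∀ ε : ℝ, 0 < ε → -(H + 2 * ε) ≤ Filter.liminf u Filter.atTop :=
    fun ε hε => Filter.le_liminf_of_le cobdd (key ε hε)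
  by_contra hcon
  push_neg at hcon
  have hε : 0 < (-H - Filter.liminf u Filter.atTop) / 3 := by linarith
  have := hfin _ hε
  linarith
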